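/- arXiv:math/0411262 — 2 statements merged into one kernel-verified Lean document; each statement's English description precedes it below -/
import Mathlib

section
/- Let q be a power of a prime p and let B be a commutative 𝔽_q-algebra, complete with respect to a nonarchimedean ring norm ‖·‖. Let r, m ≥ 1, let Δ₀ ∈ M_r(B) with ‖Δ₀‖ ≤ 1, and let Ψ ∈ M_{r×m}(B) with ‖Ψ‖ < 1. Then the series Φ := ∑_{ν=0}^{∞} Δ₀ · Δ₀^{[q]} · Δ₀^{[q²]} ⋯ Δ₀^{[q^{ν−1}]} · Ψ^{[q^ν]} converges in M_{r×m}(B), it satisfies Φ − Δ₀·Φ^{[q]} = Ψ and ‖Φ‖ = ‖Ψ‖, and Φ is the unique solution of the equation X − Δ₀·X^{[q]} = Ψ with ‖X‖ < 1. -/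
attribute [local instance] Matrix.seminormedAddCommGroup Matrix.normedAddCommGroup

noncomputable def matNorm {ι κ : Type*} [Fintype ι] [Fintype κ] {B : Type*} [Norm B]
    (M : Matrix ι κ B) : ℝ :=
  ⨆ i, ⨆ j, ‖M i j‖

set_option linter.unusedSectionVars false

section Aux
variable {B : Type*} [NormedCommRing B] [IsUltrametricDist B]
variable {ι κ σ : Type*} [Fintype ι] [Fintype κ] [Fintype σ]

lemma entry_le_matNorm (M : Matrix ι κ B) (i : ι) (j : κ) : ‖M i j‖ ≤ matNorm M :=
  le_trans (le_ciSup (f := fun j => ‖M i j‖) (Set.Finite.bddAbove (Set.finite_range _)) j)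
    (le_ciSup (f := fun i => ⨆ j, ‖M i j‖) (Set.Finite.bddAbove (Set.finite_range _)) i)

lemma matNorm_eq [Nonempty ι] [Nonempty κ] (M : Matrix ι κ B) : matNorm M = ‖M‖ := by
  refine le_antisymm (ciSup_le fun i => ciSup_le fun j =>
    M.norm_entry_le_entrywise_sup_norm) ?_
  refine (Matrix.norm_le_iff ?_).2 fun i j => entry_le_matNorm M i j
  exact le_trans (norm_nonneg (M (Classical.arbitrary ι) (Classical.arbitrary κ)))
    (entry_le_matNorm M _ _)

lemma mat_norm_sum_le {γ : Type*} {s : Finset γ} {f : γ → Matrix ι κ B} {C : ℝ}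
    (h0 : 0 ≤ C) (h : ∀ ν ∈ s, ‖f ν‖ ≤ C) : ‖∑ ν ∈ s, f ν‖ ≤ C := by
  refine (Matrix.norm_le_iff h0).2 fun i j => ?_
  rw [Matrix.sum_apply]
  exact IsUltrametricDist.norm_sum_le_of_forall_le_of_nonneg h0 fun ν hν =>
    ((f ν).norm_entry_le_entrywise_sup_norm).trans (h ν hν)

lemma mat_norm_mul_le (A : Matrix ι κ B) (C : Matrix κ σ B) : ‖A * C‖ ≤ ‖A‖ * ‖C‖ := by
  have h0 : (0:ℝ) ≤ ‖A‖ * ‖C‖ := mul_nonneg (norm_nonneg _) (norm_nonneg _)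
  refine (Matrix.norm_le_iff h0).2 fun i j => ?_
  rw [Matrix.mul_apply]
  refine IsUltrametricDist.norm_sum_le_of_forall_le_of_nonneg h0 fun k _ => ?_
  exact (norm_mul_le _ _).trans (mul_le_mul (A.norm_entry_le_entrywise_sup_norm)
    (C.norm_entry_le_entrywise_sup_norm) (norm_nonneg _) (norm_nonneg _))

lemma mat_norm_map_pow_le [NormOneClass B] (M : Matrix ι κ B) (e : ℕ) :
    ‖M.map (· ^ e)‖ ≤ ‖M‖ ^ e := by
  refine (Matrix.norm_le_iff (pow_nonneg (norm_nonneg _) _)).2 fun i j => ?_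
  exact (norm_pow_le _ _).trans (pow_le_pow_left₀ (norm_nonneg _)
    (M.norm_entry_le_entrywise_sup_norm) _)

lemma mat_norm_add_le_max (A C : Matrix ι κ B) : ‖A + C‖ ≤ max ‖A‖ ‖C‖ := by
  refine (Matrix.norm_le_iff (le_max_of_le_left (norm_nonneg _))).2 fun i j => ?_
  refine (IsUltrametricDist.norm_add_le_max _ _).trans (max_le_max ?_ ?_) <;>
    exact Matrix.norm_entry_le_entrywise_sup_norm _

lemma mat_norm_sub_le_max (A C : Matrix ι κ B) : ‖A - C‖ ≤ max ‖A‖ ‖C‖ := by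
  rw [sub_eq_add_neg]
  simpa using mat_norm_add_le_max A (-C)

lemma mat_norm_one_le [NormOneClass B] [DecidableEq ι] : ‖(1 : Matrix ι ι B)‖ ≤ 1 := by
  refine (Matrix.norm_le_iff zero_le_one).2 fun i j => ?_
  rw [Matrix.one_apply]
  split <;> simp

end Aux

/-- Let `q = pⁿ` and let `B` be a commutative `𝔽_q`-algebra, complete with
respect to a nonarchimedean ring norm.  Let `Δ₀ ∈ M_r(B)` with `‖Δ₀‖ ≤ 1` and
`Ψ ∈ M_{r×m}(B)` with `‖Ψ‖ < 1`.  Then the series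
`Φ = ∑_ν Δ₀ Δ₀^{[q]} ⋯ Δ₀^{[q^{ν-1}]} Ψ^{[q^ν]}` converges in `M_{r×m}(B)`, it satisfies
`Φ - Δ₀ Φ^{[q]} = Ψ` and `‖Φ‖ = ‖Ψ‖`, and `Φ` is the unique solution of
`X - Δ₀ X^{[q]} = Ψ` with `‖X‖ < 1`. -/
theorem statement5
    (p n q : ℕ) [Fact p.Prime] (hn : n ≠ 0) (hq : q = p ^ n)
    (B : Type) [NormedCommRing B] [NormOneClass B] [IsUltrametricDist B] [CompleteSpace B]
    [Algebra (GaloisField p n) B]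
    (r m : ℕ) (hr : 1 ≤ r) (hm : 1 ≤ m)
    (Δ₀ : Matrix (Fin r) (Fin r) B) (hΔ₀ : matNorm Δ₀ ≤ 1)
    (Ψ : Matrix (Fin r) (Fin m) B) (hΨ : matNorm Ψ < 1) :
    ∃ Φ : Matrix (Fin r) (Fin m) B,
      Filter.Tendsto
        (fun N => matNorm
          ((∑ ν ∈ Finset.range N,
              ((List.range ν).map (fun k => Δ₀.map (· ^ q ^ k))).prod * Ψ.map (· ^ q ^ ν))
            - Φ))
        Filter.atTop (nhds 0) ∧
      Φ - Δ₀ * Φ.map (· ^ q) = Ψ ∧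
      matNorm Φ = matNorm Ψ ∧
      ∀ X : Matrix (Fin r) (Fin m) B,
        X - Δ₀ * X.map (· ^ q) = Ψ → matNorm X < 1 → X = Φ := by
  haveI : Nonempty (Fin r) := Fin.pos_iff_nonempty.1 hr
  haveI : Nonempty (Fin m) := Fin.pos_iff_nonempty.1 hm
  haveI : @CompleteSpace (Matrix (Fin r) (Fin m) B) PseudoMetricSpace.toUniformSpace :=
    inferInstanceAs (CompleteSpace (Fin r → Fin m → B))
  haveI : Nontrivial B := nontrivial_of_ne (1:B) 0 (by
    intro h
    have h1 := norm_one (α := B)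
    rw [h, norm_zero] at h1
    exact one_ne_zero h1.symm)
  haveI : CharP B p := charP_of_injective_algebraMap
    (algebraMap (GaloisField p n) B).injective p
  have hq2 : 2 ≤ q := by
    subst hq
    exact le_trans (Nat.Prime.two_le Fact.out) (Nat.le_self_pow hn p)
  -- the Frobenius ring hom
  set φ : B →+* B := iterateFrobenius B p n with hφdef
  have hφx : ∀ x : B, φ x = x ^ q := fun x => by
    rw [hφdef, iterateFrobenius_def, hq]
  have hφfun : (fun x : B => x ^ q) = ⇑φ := funext fun x => (hφx x).symm
  -- rewrite norms
  rw [matNorm_eq] at hΔ₀ hΨ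
  -- abbreviations
  set g : ℕ → Matrix (Fin r) (Fin r) B := fun k => Δ₀.map (· ^ q ^ k) with hgdef
  set T : ℕ → Matrix (Fin r) (Fin m) B :=
    fun ν => ((List.range ν).map g).prod * Ψ.map (· ^ q ^ ν) with hTdef
  have hg0 : g 0 = Δ₀ := by
    have : (fun x : B => x ^ q ^ 0) = id := funext fun x => by simp
    simp [hgdef, this]
  have hpowq : ∀ (k : ℕ) (x : B), φ (x ^ q ^ k) = x ^ q ^ (k + 1) := by
    intro k x
    rw [hφx, ← pow_mul, ← pow_succ]
  have hgmap : ∀ k, (g k).map ⇑φ = g (k + 1) := by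
    intro k
    show (Δ₀.map fun x => x ^ q ^ k).map ⇑φ = Δ₀.map fun x => x ^ q ^ (k + 1)
    rw [Matrix.map_map]
    exact Matrix.ext fun i j => hpowq k (Δ₀ i j)
  have hΨmap : ∀ ν, ((Ψ.map fun x => x ^ q ^ ν).map ⇑φ) = Ψ.map fun x => x ^ q ^ (ν + 1) := by
    intro ν
    rw [Matrix.map_map]
    exact Matrix.ext fun i j => hpowq ν (Ψ i j)
  have hPmap : ∀ ν, Δ₀ * (((List.range ν).map g).prod).map ⇑φ
      = ((List.range (ν + 1)).map g).prod := by
    intro ν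
    rw [← RingHom.mapMatrix_apply, map_list_prod, List.map_map,
      List.range_succ_eq_map, List.map_cons, List.prod_cons, List.map_map, hg0]
    refine congr_arg (fun l : List (Matrix (Fin r) (Fin r) B) => Δ₀ * l.prod)
      (List.map_congr_left fun k _ => ?_)
    simp only [Function.comp_apply, RingHom.mapMatrix_apply]
    exact hgmap k
  have hTrec : ∀ ν, Δ₀ * (T ν).map ⇑φ = T (ν + 1) := by
    intro ν
    show Δ₀ * ((((List.range ν).map g).prod * Ψ.map fun x => x ^ q ^ ν).map ⇑φ)
        = ((List.range (ν + 1)).map g).prod * Ψ.map fun x => x ^ q ^ (ν + 1)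
    rw [Matrix.map_mul (f := φ), ← Matrix.mul_assoc, hPmap, hΨmap]
  have hT0 : T 0 = Ψ := by
    have : (fun x : B => x ^ q ^ 0) = id := funext fun x => by simp
    simp [hTdef, this]
  -- norm bounds
  have hc0 : (0:ℝ) ≤ ‖Ψ‖ := norm_nonneg _
  have hgle : ∀ k, ‖g k‖ ≤ 1 := fun k =>
    (mat_norm_map_pow_le _ _).trans (pow_le_one₀ (norm_nonneg _) hΔ₀)
  have hPle : ∀ ν, ‖((List.range ν).map g).prod‖ ≤ 1 := by
    intro ν
    induction ν with
    | zero => simpa using mat_norm_one_le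
    | succ ν ih =>
        rw [List.range_succ, List.map_append, List.prod_append, List.map_singleton,
          List.prod_singleton]
        calc ‖((List.range ν).map g).prod * g ν‖
            ≤ ‖((List.range ν).map g).prod‖ * ‖g ν‖ := mat_norm_mul_le _ _
          _ ≤ 1 * 1 := mul_le_mul ih (hgle ν) (norm_nonneg _) zero_le_one
          _ = 1 := one_mul 1
  have hTle : ∀ ν, ‖T ν‖ ≤ ‖Ψ‖ ^ (ν + 1) := by
    intro ν
    calc ‖T ν‖ ≤ ‖((List.range ν).map g).prod‖ * ‖Ψ.map (· ^ q ^ ν)‖ :=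
          mat_norm_mul_le _ _
      _ ≤ 1 * ‖Ψ‖ ^ q ^ ν := mul_le_mul (hPle ν) (mat_norm_map_pow_le _ _)
          (norm_nonneg _) zero_le_one
      _ = ‖Ψ‖ ^ q ^ ν := one_mul _
      _ ≤ ‖Ψ‖ ^ (ν + 1) := by
          refine pow_le_pow_of_le_one hc0 hΨ.le ?_
          exact Nat.succ_le_of_lt (lt_of_lt_of_le (Nat.lt_two_pow_self (n := ν))
            (Nat.pow_le_pow_left hq2 ν))
  have hTle' : ∀ ν, ‖T ν‖ ≤ ‖Ψ‖ := fun ν => (hTle ν).trans (by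
    calc ‖Ψ‖ ^ (ν + 1) ≤ ‖Ψ‖ ^ 1 := pow_le_pow_of_le_one hc0 hΨ.le (Nat.succ_le_succ (Nat.zero_le ν))
      _ = ‖Ψ‖ := pow_one _)
  -- summability
  have hsummable : Summable T := by
    have hgeo := (summable_geometric_of_lt_one hc0 hΨ).mul_right ‖Ψ‖
    simp only [← pow_succ] at hgeo
    exact Summable.of_norm_bounded hgeo hTle
  set Φ : Matrix (Fin r) (Fin m) B := ∑' ν, T ν with hΦdef
  have hHasSum : HasSum T Φ := hsummable.hasSum
  have hTendsto : Filter.Tendsto (fun N => ∑ ν ∈ Finset.range N, T ν)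
      Filter.atTop (nhds Φ) := hHasSum.tendsto_sum_nat
  -- continuity of A ↦ Δ₀ * A.map φ
  have hLcont : Continuous fun A : Matrix (Fin r) (Fin m) B => Δ₀ * A.map φ := by
    refine continuous_pi fun i => continuous_pi fun j => ?_
    simp only [Matrix.mul_apply, Matrix.map_apply, hφx]
    exact continuous_finset_sum _ fun k _ => continuous_const.mul
      (((continuous_apply j).comp (continuous_apply k)).pow q)
  -- the additive hom
  let L : Matrix (Fin r) (Fin m) B →+ Matrix (Fin r) (Fin m) B :=
    { toFun := fun A => Δ₀ * A.map φ
      map_zero' := by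
        show Δ₀ * (0 : Matrix (Fin r) (Fin m) B).map ⇑φ = 0
        rw [Matrix.map_zero _ (map_zero φ), Matrix.mul_zero]
      map_add' := fun X Y => by
        show Δ₀ * (X + Y).map ⇑φ = Δ₀ * X.map ⇑φ + Δ₀ * Y.map ⇑φ
        rw [Matrix.map_add _ (map_add φ), Matrix.mul_add] }
  have hLsum : HasSum (fun ν => T (ν + 1)) (Δ₀ * Φ.map φ) := by
    have hmap := hHasSum.map L hLcont
    have heq : (⇑L ∘ T) = fun ν => T (ν + 1) := funext fun ν => hTrec ν
    rw [heq] at hmap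
    exact hmap
  have hLsum' : HasSum (fun ν => T (ν + 1)) (Φ - Ψ) := by
    have := (hasSum_nat_add_iff' 1).2 hHasSum
    simpa [hT0] using this
  have hfe : Φ - Δ₀ * Φ.map φ = Ψ := by
    have := hLsum.unique hLsum'
    rw [this]
    abel
  -- norm of Φ
  have hΦle : ‖Φ‖ ≤ ‖Ψ‖ := by
    refine le_of_tendsto hTendsto.norm (Filter.Eventually.of_forall fun N => ?_)
    exact mat_norm_sum_le hc0 fun ν _ => hTle' ν
  have hΦeq : ‖Φ‖ = ‖Ψ‖ := by
    rcases eq_or_lt_of_le hc0 with h0 | hcpos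
    · have hle : ‖Ψ‖ ≤ ‖Φ‖ := by rw [← h0]; exact norm_nonneg Φ
      exact le_antisymm hΦle hle
    · have htail : ‖Δ₀ * Φ.map φ‖ < ‖Ψ‖ := by
        calc ‖Δ₀ * Φ.map φ‖ ≤ ‖Δ₀‖ * ‖Φ.map φ‖ := mat_norm_mul_le _ _
          _ ≤ 1 * ‖Φ‖ ^ q := by
              refine mul_le_mul hΔ₀ ?_ (norm_nonneg _) zero_le_one
              rw [← hφfun]; exact mat_norm_map_pow_le _ _
          _ = ‖Φ‖ ^ q := one_mul _
          _ ≤ ‖Ψ‖ ^ q := pow_le_pow_left₀ (norm_nonneg _) hΦle _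
          _ < ‖Ψ‖ ^ 1 := pow_lt_pow_right_of_lt_one₀ hcpos hΨ (by omega)
          _ = ‖Ψ‖ := pow_one _
      refine le_antisymm hΦle ?_
      have h1 : ‖Ψ‖ ≤ max ‖Φ‖ ‖Δ₀ * Φ.map φ‖ := hfe ▸ mat_norm_sub_le_max _ _
      rcases le_max_iff.1 h1 with h | h
      · exact h
      · exact absurd h (not_le.2 htail)
  refine ⟨Φ, ?_, ?_, ?_, ?_⟩
  · simp only [matNorm_eq]
    exact tendsto_iff_norm_sub_tendsto_zero.1 hTendsto
  · rw [hφfun]; exact hfe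
  · rw [matNorm_eq, matNorm_eq]; exact hΦeq
  · intro X hX hXnorm
    rw [matNorm_eq] at hXnorm
    rw [hφfun] at hX
    set D : Matrix (Fin r) (Fin m) B := X - Φ with hDdef
    have hD : Δ₀ * D.map φ = D := by
      rw [hDdef, Matrix.map_sub _ (map_sub φ), Matrix.mul_sub]
      have h1 : Δ₀ * X.map φ = X - Ψ := by rw [← hX]; abel
      have h2 : Δ₀ * Φ.map φ = Φ - Ψ := by rw [← hfe]; abel
      rw [h1, h2]; abel
    have hDle : ‖D‖ ≤ ‖D‖ ^ q := by
      calc ‖D‖ = ‖Δ₀ * D.map φ‖ := by rw [hD]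
        _ ≤ ‖Δ₀‖ * ‖D.map φ‖ := mat_norm_mul_le _ _
        _ ≤ 1 * ‖D‖ ^ q := by
            refine mul_le_mul hΔ₀ ?_ (norm_nonneg _) zero_le_one
            rw [← hφfun]; exact mat_norm_map_pow_le _ _
        _ = ‖D‖ ^ q := one_mul _
    have hD1 : ‖D‖ < 1 := by
      refine (mat_norm_sub_le_max X Φ).trans_lt (max_lt hXnorm ?_)
      rw [hΦeq]; exact hΨ
    have hD0 : ‖D‖ = 0 := by
      by_contra h
      have hpos : 0 < ‖D‖ := lt_of_le_of_ne (norm_nonneg _) (Ne.symm h)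
      have hlt : ‖D‖ ^ q < ‖D‖ ^ 1 := pow_lt_pow_right_of_lt_one₀ hpos hD1 (by omega)
      rw [pow_one] at hlt
      exact absurd hDle (not_le.2 hlt)
    have : D = 0 := norm_eq_zero.1 hD0
    rw [hDdef] at this
    exact sub_eq_zero.1 this
end

section
/- Let q be a power of a prime p, let L be a field of characteristic p containing 𝔽_q with a nonarchimedean absolute value |·|, and let B be a commutative unital L-algebra with a nonarchimedean ring norm ‖·‖ satisfying ‖λ·x‖ = |λ|·‖x‖ for λ ∈ L and x ∈ B. Let θ ∈ L with |θ| > 1, let d ≥ 1, let N ∈ M_d(B) be nilpotent, and let s ≥ 0 and G₁, …, G_s ∈ M_d(B). Let (e_j)_{j≥0} be the unique sequence of matrices in M_d(B) with e₀ = Id satisfying e_j·(θ^{q^j}·Id + N^{[q^j]}) = (θ·Id + N)·e_j + ∑_{k=1}^{min(j,s)} G_k·(e_{j−k})^{[q^k]} for all j ≥ 1. Then for every real ρ > 0 one has ‖e_j‖·ρ^{q^j} → 0 as j → ∞ (equivalently, q^{−j}·log ‖e_j‖ → −∞). -/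
section MatNormAux

variable {d : ℕ} [NeZero d] {B : Type} [NormedCommRing B] [IsUltrametricDist B]

lemma matNorm_le {M : Matrix (Fin d) (Fin d) B} {c : ℝ} (h : ∀ i j, ‖M i j‖ ≤ c) :
    matNorm M ≤ c :=
  ciSup_le fun i => ciSup_le fun j => h i j

lemma le_matNorm (M : Matrix (Fin d) (Fin d) B) (i j : Fin d) : ‖M i j‖ ≤ matNorm M :=
  le_trans (le_ciSup (f := fun j => ‖M i j‖) (Set.finite_range _).bddAbove j)
    (le_ciSup (f := fun i => ⨆ j, ‖M i j‖) (Set.finite_range _).bddAbove i)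

lemma matNorm_nonneg (M : Matrix (Fin d) (Fin d) B) : 0 ≤ matNorm M := by
  obtain ⟨i⟩ := (inferInstance : Nonempty (Fin d))
  exact le_trans (norm_nonneg _) (le_matNorm M i i)

lemma matNorm_zero : matNorm (0 : Matrix (Fin d) (Fin d) B) = 0 :=
  le_antisymm (matNorm_le fun _ _ => by simp) (matNorm_nonneg 0)

lemma matNorm_mul_le (M P : Matrix (Fin d) (Fin d) B) :
    matNorm (M * P) ≤ matNorm M * matNorm P := by
  refine matNorm_le fun i j => ?_
  rw [Matrix.mul_apply]
  refine IsUltrametricDist.norm_sum_le_of_forall_le_of_nonneg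
    (mul_nonneg (matNorm_nonneg M) (matNorm_nonneg P)) fun k _ => ?_
  exact (norm_mul_le _ _).trans
    (mul_le_mul (le_matNorm M i k) (le_matNorm P k j) (norm_nonneg _) (matNorm_nonneg M))

lemma matNorm_sub_le (M P : Matrix (Fin d) (Fin d) B) :
    matNorm (M - P) ≤ max (matNorm M) (matNorm P) := by
  refine matNorm_le fun i j => ?_
  have h : (M - P) i j = M i j + (- P i j) := by simp [sub_eq_add_neg]
  rw [h]
  exact (IsUltrametricDist.norm_add_le_max _ _).trans
    (by rw [norm_neg]; exact max_le_max (le_matNorm M i j) (le_matNorm P i j))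

lemma matNorm_add_le (M P : Matrix (Fin d) (Fin d) B) :
    matNorm (M + P) ≤ max (matNorm M) (matNorm P) := by
  refine matNorm_le fun i j => ?_
  rw [Matrix.add_apply]
  exact (IsUltrametricDist.norm_add_le_max _ _).trans
    (max_le_max (le_matNorm M i j) (le_matNorm P i j))

lemma matNorm_sum_le {ι : Type*} {t : Finset ι} {f : ι → Matrix (Fin d) (Fin d) B} {c : ℝ}
    (hc : 0 ≤ c) (h : ∀ k ∈ t, matNorm (f k) ≤ c) : matNorm (∑ k ∈ t, f k) ≤ c := by
  refine matNorm_le fun i j => ?_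
  rw [Matrix.sum_apply]
  exact IsUltrametricDist.norm_sum_le_of_forall_le_of_nonneg hc
    fun k hk => (le_matNorm (f k) i j).trans (h k hk)

lemma matNorm_map_pow_le (M : Matrix (Fin d) (Fin d) B) {t : ℕ} (ht : 0 < t) :
    matNorm (M.map (· ^ t)) ≤ matNorm M ^ t := by
  refine matNorm_le fun i j => ?_
  rw [Matrix.map_apply]
  exact (norm_pow_le' _ ht).trans (pow_le_pow_left₀ (norm_nonneg _) (le_matNorm M i j) t)

lemma matNorm_smul {L : Type} [NormedField L] [Algebra L B]
    (hnorm : ∀ (l : L) (x : B), ‖l • x‖ = ‖l‖ * ‖x‖) (l : L) (M : Matrix (Fin d) (Fin d) B) :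
    matNorm (l • M) = ‖l‖ * matNorm M := by
  have hle : ∀ (a : L) (P : Matrix (Fin d) (Fin d) B), matNorm (a • P) ≤ ‖a‖ * matNorm P := by
    intro a P
    refine matNorm_le fun i j => ?_
    rw [Matrix.smul_apply, hnorm]
    exact mul_le_mul_of_nonneg_left (le_matNorm P i j) (norm_nonneg a)
  rcases eq_or_ne l 0 with rfl | hl
  · rw [zero_smul, matNorm_zero, norm_zero, zero_mul]
  · refine le_antisymm (hle l M) ?_
    have h2 : matNorm M ≤ ‖l‖⁻¹ * matNorm (l • M) := by
      have h3 := hle l⁻¹ (l • M)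
      rwa [inv_smul_smul₀ hl, norm_inv] at h3
    calc ‖l‖ * matNorm M ≤ ‖l‖ * (‖l‖⁻¹ * matNorm (l • M)) :=
          mul_le_mul_of_nonneg_left h2 (norm_nonneg l)
      _ = matNorm (l • M) := by
          rw [← mul_assoc, mul_inv_cancel₀ (norm_ne_zero_iff.mpr hl), one_mul]

end MatNormAux

set_option maxHeartbeats 1000000

/-- Let `q = pⁿ`, let `L ⊇ 𝔽_q` be a field of characteristic `p` with a
nonarchimedean absolute value, and let `B` be a commutative unital `L`-algebra with a
nonarchimedean ring norm satisfying `‖λ•x‖ = |λ|‖x‖`.  Let `θ ∈ L` with `|θ| > 1`, let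
`N ∈ M_d(B)` be nilpotent and `G₁, …, G_s ∈ M_d(B)`.  Let `(e_j)` be the (unique) sequence
with `e₀ = Id` satisfying, for every `j ≥ 1`,
`e_j (θ^{q^j} Id + N^{[q^j]}) = (θ Id + N) e_j + ∑_{k=1}^{min(j,s)} G_k (e_{j-k})^{[q^k]}`.
Then `‖e_j‖ ρ^{q^j} → 0` for every real `ρ > 0`. -/
theorem statement10
    (p n q : ℕ) [Fact p.Prime] (hn : n ≠ 0) (hq : q = p ^ n)
    (L : Type) [NormedField L] [IsUltrametricDist L] [CharP L p]
    (φ : GaloisField p n →+* L)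
    (B : Type) [NormedCommRing B] [NormOneClass B] [IsUltrametricDist B] [Algebra L B]
    (hnorm : ∀ (l : L) (x : B), ‖l • x‖ = ‖l‖ * ‖x‖)
    (θ : L) (hθ : 1 < ‖θ‖)
    (d : ℕ) (hd : 1 ≤ d)
    (N : Matrix (Fin d) (Fin d) B) (hN : IsNilpotent N)
    (s : ℕ) (G : ℕ → Matrix (Fin d) (Fin d) B)
    (e : ℕ → Matrix (Fin d) (Fin d) B) (he0 : e 0 = 1)
    (hrec : ∀ j : ℕ, 1 ≤ j →
      e j * ((algebraMap L B (θ ^ q ^ j)) • (1 : Matrix (Fin d) (Fin d) B) + N.map (· ^ q ^ j))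
        = ((algebraMap L B θ) • (1 : Matrix (Fin d) (Fin d) B) + N) * e j +
            ∑ k ∈ Finset.Icc 1 (min j s), G k * (e (j - k)).map (· ^ q ^ k)) :
    ∀ ρ : ℝ, 0 < ρ →
      Filter.Tendsto (fun j => matNorm (e j) * ρ ^ q ^ j) Filter.atTop (nhds 0) := by
  haveI : NeZero d := ⟨by omega⟩
  haveI : Nontrivial B := ⟨1, 0, fun h => by simpa [h] using (norm_one : ‖(1:B)‖ = 1)⟩
  haveI : CharP B p := charP_of_injective_algebraMap (algebraMap L B).injective p
  haveI : ExpChar B p := .prime Fact.out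
  -- basic numerics
  have hq2 : 2 ≤ q := by
    rw [hq]
    calc 2 ≤ p := (Fact.out : p.Prime).two_le
      _ = p ^ 1 := (pow_one p).symm
      _ ≤ p ^ n := Nat.pow_le_pow_right (by have := (Fact.out : p.Prime).two_le; omega) (by omega)
  have hqj1 : ∀ j : ℕ, 1 ≤ q ^ j := fun j => Nat.one_le_pow _ _ (by omega)
  -- Frobenius maps
  set σ : ℕ → (B →+* B) := fun t => iterateFrobenius B p (n * t) with hσdef
  have hσ_apply : ∀ (t : ℕ) (x : B), σ t x = x ^ q ^ t := by
    intro t x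
    rw [hσdef]
    show iterateFrobenius B p (n * t) x = x ^ q ^ t
    rw [iterateFrobenius_def p (n*t) x, hq, ← pow_mul]
  have hmap : ∀ (t : ℕ) (M : Matrix (Fin d) (Fin d) B), M.map (· ^ q ^ t) = M.map (σ t) := by
    intro t M; ext i j; simp [Matrix.map_apply, hσ_apply]
  have hmap_mul : ∀ (t : ℕ) (M P : Matrix (Fin d) (Fin d) B),
      (M * P).map (σ t) = M.map (σ t) * P.map (σ t) := by
    intro t M P
    simpa [RingHom.mapMatrix_apply] using map_mul (σ t).mapMatrix M P
  have hmap_comp : ∀ (k j : ℕ), k ≤ j → ∀ (M : Matrix (Fin d) (Fin d) B),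
      M.map (σ j) = (M.map (σ (j - k))).map (σ k) := by
    intro k j hk M
    have hfun : (⇑(σ k) ∘ ⇑(σ (j - k))) = ⇑(σ j) := by
      funext x
      rw [Function.comp_apply, hσ_apply, hσ_apply, hσ_apply, ← pow_mul, ← pow_add,
        Nat.sub_add_cancel hk]
    rw [Matrix.map_map, hfun]
  clear_value σ
  -- the rearranged recursion
  set Sm : ℕ → Matrix (Fin d) (Fin d) B :=
    fun j => ∑ k ∈ Finset.Icc 1 (min j s), G k * (e (j - k)).map (σ k) with hSm
  clear_value Sm
  have h1 : ∀ j, 1 ≤ j →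
      (θ ^ q ^ j - θ) • e j = N * e j - e j * N.map (σ j) + Sm j := by
    intro j hj
    have h := hrec j hj
    rw [hmap j N] at h
    have hsum : ∑ k ∈ Finset.Icc 1 (min j s), G k * (e (j - k)).map (· ^ q ^ k) = Sm j := by
      rw [hSm]
      exact Finset.sum_congr rfl fun k _ => by rw [hmap k]
    rw [hsum, mul_add, Matrix.mul_smul, mul_one, add_mul, Matrix.smul_mul, one_mul,
      algebraMap_smul, algebraMap_smul] at h
    rw [sub_smul, sub_add_eq_add_sub, sub_eq_sub_iff_add_eq_add]
    rw [h]
    abel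
  have hkey : ∀ j, 1 ≤ j → ∀ a i : ℕ,
      (θ ^ q ^ j - θ) • (N ^ a * e j * (N ^ i).map (σ j))
        = N ^ (a + 1) * e j * (N ^ i).map (σ j)
          - N ^ a * e j * (N ^ (i + 1)).map (σ j)
          + N ^ a * (Sm j * (N ^ i).map (σ j)) := by
    intro j hj a i
    have h2 := congrArg (fun X => N ^ a * X * (N ^ i).map (σ j)) (h1 j hj)
    simp only [Matrix.mul_smul, Matrix.smul_mul, mul_sub, sub_mul, mul_add, add_mul] at h2
    rw [h2]
    have hpow : N ^ (a+1) * e j = N ^ a * (N * e j) := by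
      rw [← mul_assoc, pow_succ]
    have hNm : e j * N.map (σ j) * (N ^ i).map (σ j) = e j * (N ^ (i+1)).map (σ j) := by
      rw [mul_assoc, ← hmap_mul, ← pow_succ']
    rw [hpow]
    congr 1
    · congr 1
      rw [mul_assoc, hNm, ← mul_assoc]
    · exact mul_assoc _ _ _
  -- norms and constants
  set Λ := ‖θ‖ with hΛdef
  have hΛ0 : (0:ℝ) < Λ := lt_trans one_pos hθ
  have hμ : ∀ j, 1 ≤ j → ‖θ ^ q ^ j - θ‖ = Λ ^ q ^ j := by
    intro j hj
    have h1' : Λ < Λ ^ q ^ j := by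
      calc Λ = Λ ^ 1 := (pow_one _).symm
        _ < Λ ^ q ^ j := pow_lt_pow_right₀ hθ (by
            have := Nat.one_lt_two_pow_iff.mpr (show j ≠ 0 by omega)
            have h2j : 2 ^ j ≤ q ^ j := Nat.pow_le_pow_left hq2 j
            have hj1 : 1 ≤ j := hj
            have : 2 ≤ q ^ j := le_trans (by omega : 2 ≤ 2 ^ j) h2j
            omega)
    rw [sub_eq_add_neg, IsUltrametricDist.norm_add_eq_max_of_norm_ne_norm
      (by rw [norm_neg, norm_pow]; exact ne_of_gt h1'), norm_neg, norm_pow]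
    exact max_eq_left h1'.le
  -- nilpotency
  obtain ⟨m₀, hm₀⟩ := hN
  set m : ℕ := m₀ + 1 with hmdef
  clear_value m
  have hm : ∀ a, m ≤ a → N ^ a = 0 := by
    intro a ha
    have h3 : N ^ a = N ^ m₀ * N ^ (a - m₀) := by rw [← pow_add]; congr 1; omega
    rw [h3, hm₀, zero_mul]
  -- abbreviation
  set w : ℕ → ℕ → Matrix (Fin d) (Fin d) B := fun j i => e j * (N ^ i).map (σ j) with hwdef
  clear_value w
  have hw0 : ∀ j i, m ≤ i → w j i = 0 := by
    intro j i hi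
    rw [hwdef]
    show e j * (N ^ i).map (σ j) = 0
    rw [hm i hi, Matrix.map_zero _ (map_zero _), mul_zero]
  -- constants
  set K : ℝ := 1 + ∑ a ∈ Finset.range m, matNorm (N ^ a) with hKdef
  have hKsum : (0:ℝ) ≤ ∑ a ∈ Finset.range m, matNorm (N ^ a) :=
    Finset.sum_nonneg fun a _ => matNorm_nonneg _
  have hK1 : (1:ℝ) ≤ K := by rw [hKdef]; linarith
  have hKa : ∀ a : ℕ, matNorm (N ^ a) ≤ K := by
    intro a
    by_cases ha : a < m
    · have := Finset.single_le_sum (f := fun a => matNorm (N ^ a))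
        (fun i _ => matNorm_nonneg _) (Finset.mem_range.mpr ha)
      rw [hKdef]; linarith
    · rw [hm a (by omega), matNorm_zero]; linarith
  clear_value K
  set D : ℝ := 1 + ∑ k ∈ Finset.Icc 1 s, matNorm (G k) with hDdef
  have hDsum : (0:ℝ) ≤ ∑ k ∈ Finset.Icc 1 s, matNorm (G k) :=
    Finset.sum_nonneg fun a _ => matNorm_nonneg _
  have hD1 : (1:ℝ) ≤ D := by rw [hDdef]; linarith
  have hDk : ∀ j : ℕ, ∀ k ∈ Finset.Icc 1 (min j s), matNorm (G k) ≤ D := by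
    intro j k hk
    rw [Finset.mem_Icc] at hk
    have := Finset.single_le_sum (f := fun k => matNorm (G k))
      (fun i _ => matNorm_nonneg _) (Finset.mem_Icc.mpr ⟨hk.1, le_trans hk.2 (min_le_right _ _)⟩)
    rw [hDdef]; linarith
  clear_value D
  have hΛinv0 : (0:ℝ) ≤ Λ⁻¹ := inv_nonneg.mpr hΛ0.le
  have hΛinvpow : ∀ i : ℕ, (0:ℝ) ≤ Λ⁻¹ ^ i := fun i => pow_nonneg hΛinv0 i
  -- square root
  set sΛ : ℝ := Real.sqrt Λ with hsΛdef
  have hss : sΛ * sΛ = Λ := Real.mul_self_sqrt hΛ0.le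
  have hsΛ0 : 0 < sΛ := Real.sqrt_pos.mpr hΛ0
  have hsΛ1 : 1 < sΛ := by nlinarith
  set δ : ℝ := sΛ⁻¹ with hδdef
  have hδ0 : 0 < δ := by rw [hδdef]; exact inv_pos.mpr hsΛ0
  have hδ1 : δ < 1 := by rw [hδdef]; exact inv_lt_one_of_one_lt₀ hsΛ1
  have hsd : sΛ * Λ⁻¹ = δ := by
    rw [hδdef, ← hss]
    field_simp
  clear_value δ
  obtain ⟨T₀, hT₀⟩ := pow_unbounded_of_one_lt (K * D) hsΛ1
  set J₀ : ℕ := max 1 T₀ with hJ₀def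
  have hJ₀1 : 1 ≤ J₀ := le_max_left _ _
  have hKD : ∀ j, J₀ ≤ j → K * D ≤ sΛ ^ q ^ j := by
    intro j hj
    have hTq : T₀ ≤ q ^ j := by
      have h4 : j < q ^ j := Nat.lt_pow_self hq2
      have h5 : T₀ ≤ J₀ := le_max_right _ _
      omega
    calc K * D ≤ sΛ ^ T₀ := hT₀.le
      _ ≤ sΛ ^ q ^ j := pow_le_pow_right₀ hsΛ1.le hTq
  clear_value sΛ
  -- base constant
  set X₀ : ℝ := 1 + ∑ j ∈ Finset.range (J₀ + s), ∑ i ∈ Finset.range m, matNorm (w j i)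
    with hX₀def
  have hX₀sum : (0:ℝ) ≤ ∑ j ∈ Finset.range (J₀ + s), ∑ i ∈ Finset.range m, matNorm (w j i) :=
    Finset.sum_nonneg fun j _ => Finset.sum_nonneg fun i _ => matNorm_nonneg _
  have hX₀1 : (1:ℝ) ≤ X₀ := by rw [hX₀def]; linarith
  have hwX₀ : ∀ j, j < J₀ + s → ∀ i, i < m → matNorm (w j i) ≤ X₀ := by
    intro j hj i him
    have h9 := Finset.single_le_sum (f := fun i => matNorm (w j i))
      (fun i _ => matNorm_nonneg _) (Finset.mem_range.mpr him)
    have h10 := Finset.single_le_sum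
      (f := fun j => ∑ i ∈ Finset.range m, matNorm (w j i))
      (fun j _ => Finset.sum_nonneg fun i _ => matNorm_nonneg _)
      (Finset.mem_range.mpr hj)
    rw [hX₀def]; linarith
  clear_value X₀
  set C₀ : ℝ := Λ ^ m * X₀ with hC₀def
  have hC₀pos : 0 < C₀ := by
    rw [hC₀def]; exact mul_pos (pow_pos hΛ0 m) (by linarith)
  clear_value C₀
  have hbase : ∀ j, j < J₀ + s → ∀ i, matNorm (w j i) ≤ (C₀ * Λ⁻¹ ^ i) ^ q ^ j := by
    intro j hj i
    by_cases him : m ≤ i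
    · rw [hw0 j i him, matNorm_zero]
      exact pow_nonneg (mul_nonneg hC₀pos.le (hΛinvpow i)) _
    · push_neg at him
      have hmono : (1:ℝ) ≤ Λ ^ m * Λ⁻¹ ^ i := by
        have h6 : Λ ^ i ≤ Λ ^ m := pow_le_pow_right₀ (le_of_lt hθ) (by omega)
        have h7 : Λ ^ i * Λ⁻¹ ^ i = 1 := by
          rw [← mul_pow, mul_inv_cancel₀ hΛ0.ne', one_pow]
        have h8 : (0:ℝ) < Λ⁻¹ ^ i := by positivity
        nlinarith
      have hwX : matNorm (w j i) ≤ X₀ := hwX₀ j hj i him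
      have hb1 : (1:ℝ) ≤ C₀ * Λ⁻¹ ^ i := by
        rw [hC₀def, mul_assoc, mul_comm X₀, ← mul_assoc]
        nlinarith
      have hb2 : matNorm (w j i) ≤ C₀ * Λ⁻¹ ^ i := by
        rw [hC₀def, mul_assoc, mul_comm X₀, ← mul_assoc]
        nlinarith [matNorm_nonneg (w j i)]
      exact le_trans hb2 (le_self_pow₀ hb1 (by have := hqj1 j; omega))
  -- the S bound
  have hSbound : ∀ C : ℝ, 0 ≤ C → ∀ j, 1 ≤ j →
      (∀ k ∈ Finset.Icc 1 (min j s), ∀ i, matNorm (w (j-k) i) ≤ (C * Λ⁻¹ ^ i) ^ q ^ (j-k)) →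
      ∀ i, matNorm (Sm j * (N ^ i).map (σ j)) ≤ D * (C * Λ⁻¹ ^ i) ^ q ^ j := by
    intro C hC j hj hprev i
    have hrhs0 : (0:ℝ) ≤ D * (C * Λ⁻¹ ^ i) ^ q ^ j :=
      mul_nonneg (by linarith) (pow_nonneg (mul_nonneg hC (hΛinvpow i)) _)
    rw [hSm]
    show matNorm ((∑ k ∈ Finset.Icc 1 (min j s), G k * (e (j - k)).map (σ k))
      * (N ^ i).map (σ j)) ≤ _
    rw [Finset.sum_mul]
    refine matNorm_sum_le hrhs0 fun k hk => ?_
    have hkm := Finset.mem_Icc.mp hk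
    have hkj : k ≤ j := le_trans hkm.2 (min_le_left _ _)
    have hterm : G k * (e (j-k)).map (σ k) * (N ^ i).map (σ j)
        = G k * ((w (j-k) i).map (σ k)) := by
      rw [mul_assoc]
      congr 1
      rw [hmap_comp k j hkj (N ^ i), ← hmap_mul, hwdef]
    rw [hterm]
    have hmn : (0:ℝ) ≤ matNorm ((w (j-k) i).map (σ k)) := matNorm_nonneg _
    calc matNorm (G k * (w (j-k) i).map (σ k))
        ≤ matNorm (G k) * matNorm ((w (j-k) i).map (σ k)) := matNorm_mul_le _ _
      _ ≤ D * (matNorm (w (j-k) i) ^ q ^ k) := by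
          refine mul_le_mul (hDk j k hk) ?_ hmn (by linarith)
          rw [← hmap k]
          exact matNorm_map_pow_le _ (by have := hqj1 k; omega)
      _ ≤ D * (((C * Λ⁻¹ ^ i) ^ q ^ (j-k)) ^ q ^ k) := by
          refine mul_le_mul_of_nonneg_left ?_ (by linarith)
          exact pow_le_pow_left₀ (matNorm_nonneg _) (hprev k hk i) _
      _ = D * (C * Λ⁻¹ ^ i) ^ q ^ j := by
          rw [← pow_mul, ← pow_add, Nat.sub_add_cancel hkj]
  -- the inductive step
  have hstep : ∀ C : ℝ, 0 ≤ C → ∀ j, J₀ ≤ j →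
      (∀ k ∈ Finset.Icc 1 (min j s), ∀ i, matNorm (w (j-k) i) ≤ (C * Λ⁻¹ ^ i) ^ q ^ (j-k)) →
      ∀ i, matNorm (w j i) ≤ (C * δ * Λ⁻¹ ^ i) ^ q ^ j := by
    intro C hC j hj hprev
    have hj1 : 1 ≤ j := le_trans hJ₀1 hj
    have hS := hSbound C hC j hj1 hprev
    have hKD0' : (0:ℝ) ≤ K * D * C ^ q ^ j :=
      mul_nonneg (mul_nonneg (by linarith) (by linarith)) (pow_nonneg hC _)
    have hQ : ∀ i : ℕ, (0:ℝ) ≤ K * D * C ^ q ^ j * (Λ⁻¹ ^ (i+1)) ^ q ^ j := fun i =>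
      mul_nonneg hKD0' (pow_nonneg (hΛinvpow _) _)
    have hzero : ∀ a i : ℕ, m ≤ a ∨ m ≤ i → N ^ a * e j * (N ^ i).map (σ j) = 0 := by
      intro a i h
      rcases h with h | h
      · rw [hm a h, zero_mul, zero_mul]
      · rw [hm i h, Matrix.map_zero _ (map_zero _), mul_zero]
    have hv : ∀ c a i : ℕ, 2 * m ≤ a + i + c →
        matNorm (N ^ a * e j * (N ^ i).map (σ j))
          ≤ K * D * C ^ q ^ j * (Λ⁻¹ ^ (i+1)) ^ q ^ j := by
      intro c
      induction c with
      | zero =>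
        intro a i hai
        rw [hzero a i (by omega), matNorm_zero]
        exact hQ i
      | succ c ih =>
        intro a i hai
        by_cases hcase : m ≤ a ∨ m ≤ i
        · rw [hzero a i hcase, matNorm_zero]; exact hQ i
        push_neg at hcase
        have hk := congrArg matNorm (hkey j hj1 a i)
        rw [matNorm_smul hnorm, hμ j hj1] at hk
        have hinv1 : Λ⁻¹ ≤ 1 := by
          rw [← one_div]
          exact (div_le_one hΛ0).mpr (le_of_lt hθ)
        have hinv0 : (0:ℝ) ≤ Λ⁻¹ := hΛinv0
        have hmono2 : ∀ i1 i2 : ℕ, i1 ≤ i2 →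
            (Λ⁻¹ ^ i2) ^ q ^ j ≤ (Λ⁻¹ ^ i1) ^ q ^ j := fun i1 i2 h =>
          pow_le_pow_left₀ (hΛinvpow _) (pow_le_pow_of_le_one hinv0 hinv1 h) _
        have hKD0 : (0:ℝ) ≤ K * D * C ^ q ^ j := hKD0'
        have hb : matNorm (N ^ (a+1) * e j * (N ^ i).map (σ j)
              - N ^ a * e j * (N ^ (i+1)).map (σ j)
              + N ^ a * (Sm j * (N ^ i).map (σ j)))
            ≤ K * D * C ^ q ^ j * (Λ⁻¹ ^ i) ^ q ^ j := by
          refine le_trans (matNorm_add_le _ _) (max_le ?_ ?_)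
          · refine le_trans (matNorm_sub_le _ _) (max_le ?_ ?_)
            · refine le_trans (ih (a+1) i (by omega)) ?_
              exact mul_le_mul_of_nonneg_left (hmono2 i (i+1) (by omega)) hKD0
            · refine le_trans (ih a (i+1) (by omega)) ?_
              exact mul_le_mul_of_nonneg_left (hmono2 i (i+2) (by omega)) hKD0
          · calc matNorm (N ^ a * (Sm j * (N ^ i).map (σ j)))
                ≤ matNorm (N ^ a) * matNorm (Sm j * (N ^ i).map (σ j)) := matNorm_mul_le _ _
              _ ≤ K * (D * (C * Λ⁻¹ ^ i) ^ q ^ j) :=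
                  mul_le_mul (hKa a) (hS i) (matNorm_nonneg _) (by linarith)
              _ = K * D * C ^ q ^ j * (Λ⁻¹ ^ i) ^ q ^ j := by
                  rw [mul_pow]; ring
        have h3 : Λ ^ q ^ j * matNorm (N ^ a * e j * (N ^ i).map (σ j))
            ≤ K * D * C ^ q ^ j * (Λ⁻¹ ^ i) ^ q ^ j := hk ▸ hb
        have hΛq : (0:ℝ) < Λ ^ q ^ j := pow_pos hΛ0 _
        have h4 : (Λ⁻¹ ^ (i+1)) ^ q ^ j * Λ ^ q ^ j = (Λ⁻¹ ^ i) ^ q ^ j := by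
          rw [← mul_pow, pow_succ, mul_assoc, inv_mul_cancel₀ hΛ0.ne', mul_one]
        rw [← mul_le_mul_iff_of_pos_right hΛq]
        calc matNorm (N ^ a * e j * (N ^ i).map (σ j)) * Λ ^ q ^ j
            = Λ ^ q ^ j * matNorm (N ^ a * e j * (N ^ i).map (σ j)) := mul_comm _ _
          _ ≤ K * D * C ^ q ^ j * (Λ⁻¹ ^ i) ^ q ^ j := h3
          _ = K * D * C ^ q ^ j * (Λ⁻¹ ^ (i+1)) ^ q ^ j * Λ ^ q ^ j := by
              rw [mul_assoc (K * D * C ^ q ^ j), h4]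
    intro i
    have h5 : w j i = N ^ 0 * e j * (N ^ i).map (σ j) := by
      rw [hwdef]; show e j * _ = _; rw [pow_zero, one_mul]
    have h6 := hv (2*m) 0 i (by omega)
    rw [← h5] at h6
    calc matNorm (w j i) ≤ K * D * C ^ q ^ j * (Λ⁻¹ ^ (i+1)) ^ q ^ j := h6
      _ ≤ sΛ ^ q ^ j * C ^ q ^ j * (Λ⁻¹ ^ (i+1)) ^ q ^ j := by
          exact mul_le_mul_of_nonneg_right
            (mul_le_mul_of_nonneg_right (hKD j hj) (pow_nonneg hC _))
            (pow_nonneg (hΛinvpow _) _)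
      _ = (C * δ * Λ⁻¹ ^ i) ^ q ^ j := by
          rw [← mul_pow, ← mul_pow]
          congr 1
          rw [pow_succ, ← hsd]
          ring
  -- the main induction
  have hmain : ∀ t j, J₀ + t * s ≤ j → ∀ i,
      matNorm (w j i) ≤ (C₀ * δ ^ t * Λ⁻¹ ^ i) ^ q ^ j := by
    intro t
    induction t with
    | zero =>
      intro j
      induction j using Nat.strong_induction_on with
      | _ j ihj =>
        intro hJ i
        simp only [pow_zero, mul_one]
        by_cases hjs : j < J₀ + s
        · exact hbase j hjs i
        · push_neg at hjs
          have hprev : ∀ k ∈ Finset.Icc 1 (min j s), ∀ i',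
              matNorm (w (j-k) i') ≤ (C₀ * Λ⁻¹ ^ i') ^ q ^ (j-k) := by
            intro k hk i'
            have hkm := Finset.mem_Icc.mp hk
            have hks : k ≤ s := le_trans hkm.2 (min_le_right _ _)
            have h7 := ihj (j - k) (by omega) (by simp; omega) i'
            simpa only [pow_zero, mul_one] using h7
          have hst := hstep C₀ hC₀pos.le j (by omega) hprev i
          refine le_trans hst (pow_le_pow_left₀
            (mul_nonneg (mul_nonneg hC₀pos.le hδ0.le) (hΛinvpow i)) ?_ _)
          have hcd : C₀ * δ ≤ C₀ := by nlinarith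
          exact mul_le_mul_of_nonneg_right hcd (hΛinvpow i)
    | succ t iht =>
      intro j hJ i
      have hts : (t+1) * s = t * s + s := by ring
      have hprev : ∀ k ∈ Finset.Icc 1 (min j s), ∀ i',
          matNorm (w (j-k) i') ≤ (C₀ * δ ^ t * Λ⁻¹ ^ i') ^ q ^ (j-k) := by
        intro k hk i'
        have hkm := Finset.mem_Icc.mp hk
        have hks : k ≤ s := le_trans hkm.2 (min_le_right _ _)
        exact iht (j - k) (by omega) i'
      have hst := hstep (C₀ * δ ^ t) (mul_nonneg hC₀pos.le (pow_nonneg hδ0.le t))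
        j (by omega) hprev i
      refine le_trans hst (le_of_eq ?_)
      congr 1
      rw [pow_succ]
      ring
  -- conclusion
  intro ρ hρ
  obtain ⟨t, ht⟩ := exists_pow_lt_of_lt_one
    (inv_pos.mpr (mul_pos hC₀pos hρ)) hδ1
  set r : ℝ := C₀ * δ ^ t * ρ with hrdef
  clear_value r
  have hr0 : 0 ≤ r := by
    rw [hrdef]
    exact mul_nonneg (mul_nonneg hC₀pos.le (pow_nonneg hδ0.le t)) hρ.le
  have hr1 : r < 1 := by
    have h8 : C₀ * ρ * δ ^ t < C₀ * ρ * (C₀ * ρ)⁻¹ :=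
      mul_lt_mul_of_pos_left ht (mul_pos hC₀pos hρ)
    rw [mul_inv_cancel₀ (ne_of_gt (mul_pos hC₀pos hρ))] at h8
    rw [hrdef]; linarith [h8]
  have hkey2 : ∀ j, J₀ + t * s ≤ j → matNorm (e j) * ρ ^ q ^ j ≤ r ^ j := by
    intro j hJ
    have h9 := hmain t j hJ 0
    rw [pow_zero, mul_one] at h9
    have h10 : w j 0 = e j := by
      rw [hwdef]
      show e j * (N ^ 0).map (σ j) = e j
      rw [pow_zero, Matrix.map_one _ (map_zero _) (map_one _), mul_one]
    rw [h10] at h9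
    calc matNorm (e j) * ρ ^ q ^ j
        ≤ (C₀ * δ ^ t) ^ q ^ j * ρ ^ q ^ j :=
          mul_le_mul_of_nonneg_right h9 (pow_nonneg hρ.le _)
      _ = r ^ q ^ j := by rw [hrdef]; ring
      _ ≤ r ^ j := pow_le_pow_of_le_one hr0 hr1.le (le_of_lt (Nat.lt_pow_self hq2))
  refine tendsto_of_tendsto_of_tendsto_of_le_of_le' tendsto_const_nhds
    (tendsto_pow_atTop_nhds_zero_of_lt_one hr0 hr1) ?_ ?_
  · exact Filter.Eventually.of_forall fun j =>
      mul_nonneg (matNorm_nonneg _) (pow_nonneg hρ.le _)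
  · exact Filter.eventually_atTop.mpr ⟨J₀ + t * s, hkey2⟩
end
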